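/- arXiv:1609.06342 — 9 statements merged into one kernel-verified Lean document; each statement's English description precedes it below -/
import Mathlib

section
/- Define Q : ℤ → ℤ by Q(n) = 0 for all n ≤ 0, and for all k ≥ 1, Q(3k) = 3k − 2; for all k ≥ 0, Q(3k+1) = 3 and Q(3k+2) = 3k + 2 (so Q(1)=3, Q(2)=2, Q(3)=1). Then Q satisfies the Hofstadter Q-recurrence for every n ≥ 4, i.e., Q(n) = Q(n − Q(n−1)) + Q(n − Q(n−2)) for all n ≥ 4. (This is Golomb's solution to the Q-recurrence with initial condition [3,2,1].) -/
/-- Golomb's solution [3,2,1] to the Hofstadter Q-recurrence. -/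
theorem golomb_solution (Q : ℤ → ℤ)
    (h0 : ∀ n : ℤ, n ≤ 0 → Q n = 0)
    (h3k : ∀ k : ℤ, 1 ≤ k → Q (3 * k) = 3 * k - 2)
    (h3k1 : ∀ k : ℤ, 0 ≤ k → Q (3 * k + 1) = 3)
    (h3k2 : ∀ k : ℤ, 0 ≤ k → Q (3 * k + 2) = 3 * k + 2) :
    ∀ n : ℤ, 4 ≤ n → Q n = Q (n - Q (n - 1)) + Q (n - Q (n - 2)) := by
  intro n hn
  have hQ1 : Q 1 = 3 := by have := h3k1 0 le_rfl; simpa using this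
  have hQ2 : Q 2 = 2 := by have := h3k2 0 le_rfl; simpa using this
  have hQ3 : Q 3 = 1 := by have := h3k 1 le_rfl; norm_num at this; simpa using this
  have hQ4 : Q 4 = 3 := by have := h3k1 1 (by norm_num); norm_num at this; simpa using this
  obtain ⟨k, hk⟩ : ∃ k : ℤ, n = 3 * k ∨ n = 3 * k + 1 ∨ n = 3 * k + 2 :=
    ⟨n / 3, by omega⟩
  rcases hk with h | h | h
  · -- n = 3k, k ≥ 2
    have hk2 : 2 ≤ k := by omega
    have e1 : n - 1 = 3 * (k - 1) + 2 := by omega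
    have e2 : n - 2 = 3 * (k - 1) + 1 := by omega
    rw [e1, h3k2 (k - 1) (by omega), e2, h3k1 (k - 1) (by omega)]
    have e3 : n - (3 * (k - 1) + 2) = 1 := by omega
    have e4 : n - 3 = 3 * (k - 1) := by omega
    rw [e3, hQ1, e4, h3k (k - 1) (by omega), h, h3k k (by omega)]
    ring
  · -- n = 3k + 1, k ≥ 1
    have hk1 : 1 ≤ k := by omega
    have e1 : n - 1 = 3 * k := by omega
    have e2 : n - 2 = 3 * (k - 1) + 2 := by omega
    rw [e1, h3k k (by omega), e2, h3k2 (k - 1) (by omega)]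
    have e3 : n - (3 * k - 2) = 3 := by omega
    have e4 : n - (3 * (k - 1) + 2) = 2 := by omega
    rw [e3, hQ3, e4, hQ2, h, h3k1 k (by omega)]
    norm_num
  · -- n = 3k + 2, k ≥ 1
    have hk1 : 1 ≤ k := by omega
    have e1 : n - 1 = 3 * k + 1 := by omega
    have e2 : n - 2 = 3 * k := by omega
    rw [e1, h3k1 k (by omega), e2, h3k k (by omega)]
    have e3 : n - 3 = 3 * (k - 1) + 2 := by omega
    have e4 : n - (3 * k - 2) = 4 := by omega
    rw [e3, h3k2 (k - 1) (by omega), e4, hQ4, h, h3k2 k (by omega)]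
    ring
end

section
/- Let F denote the Fibonacci numbers with F_1 = F_2 = 1. Define Q : ℤ → ℤ by Q(n) = 0 for all n ≤ 0, and for all k ≥ 1, Q(3k) = F_{k+4}; for all k ≥ 0, Q(3k+1) = 3 and Q(3k+2) = 6 (so the first six values are 3, 6, 5, 3, 6, 8). Then Q satisfies the Hofstadter Q-recurrence for every n ≥ 7, i.e., Q(n) = Q(n − Q(n−1)) + Q(n − Q(n−2)) for all n ≥ 7. (This is Ruskey's solution embedding the Fibonacci numbers in the Q-recurrence, with initial condition [3,6,5,3,6,8].) -/
lemma fib_lb : ∀ k : ℕ, 2 ≤ k → 3 * k + 2 ≤ Nat.fib (k + 4) := by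
  intro k hk
  induction k with
  | zero => omega
  | succ m ih =>
    rcases Nat.lt_or_ge m 2 with hm | hm
    · interval_cases m
      · omega
      · decide
    · have h1 := ih hm
      have h2 : 3 ≤ Nat.fib (m + 3) := by
        calc 3 ≤ Nat.fib 4 := by decide
        _ ≤ Nat.fib (m + 3) := Nat.fib_mono (by omega)
      have : Nat.fib (m + 1 + 4) = Nat.fib (m + 4) + Nat.fib (m + 3) := by
        rw [show m + 1 + 4 = (m + 3) + 2 from by ring, Nat.fib_add_two,
            show m + 3 + 1 = m + 4 from rfl]
        omega
      omega

/-- Ruskey's solution [3,6,5,3,6,8] embedding the Fibonacci numbers in the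
Hofstadter Q-recurrence.  Here `Nat.fib` satisfies `fib 1 = fib 2 = 1`. -/
theorem ruskey_solution (Q : ℤ → ℤ)
    (h0 : ∀ n : ℤ, n ≤ 0 → Q n = 0)
    (h3k : ∀ k : ℕ, 1 ≤ k → Q (3 * (k : ℤ)) = (Nat.fib (k + 4) : ℤ))
    (h3k1 : ∀ k : ℤ, 0 ≤ k → Q (3 * k + 1) = 3)
    (h3k2 : ∀ k : ℤ, 0 ≤ k → Q (3 * k + 2) = 6) :
    ∀ n : ℤ, 7 ≤ n → Q n = Q (n - Q (n - 1)) + Q (n - Q (n - 2)) := by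
  intro n hn
  obtain ⟨m, hm⟩ : ∃ m : ℕ, n = (m : ℤ) := ⟨n.toNat, by omega⟩
  have hm7 : 7 ≤ m := by omega
  obtain ⟨j, hj⟩ : ∃ j : ℕ, m = 3 * j ∨ m = 3 * j + 1 ∨ m = 3 * j + 2 :=
    ⟨m / 3, by omega⟩
  rcases hj with hj | hj | hj
  · -- n = 3j, j ≥ 3
    have hj3 : 3 ≤ j := by omega
    have hq1 : Q (n - 1) = 6 := by
      rw [show n - 1 = 3 * ((j : ℤ) - 1) + 2 from by omega]
      exact h3k2 _ (by omega)
    have hq2 : Q (n - 2) = 3 := by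
      rw [show n - 2 = 3 * ((j : ℤ) - 1) + 1 from by omega]
      exact h3k1 _ (by omega)
    rw [hq1, hq2]
    rw [show n = 3 * (j : ℤ) from by omega, h3k j (by omega)]
    rw [show 3 * (j : ℤ) - 6 = 3 * ((j - 2 : ℕ) : ℤ) from by omega,
        h3k (j - 2) (by omega)]
    rw [show 3 * (j : ℤ) - 3 = 3 * ((j - 1 : ℕ) : ℤ) from by omega,
        h3k (j - 1) (by omega)]
    rw [show j - 2 + 4 = j + 2 from by omega, show j - 1 + 4 = j + 3 from by omega,
        show j + 4 = (j + 2) + 2 from by ring, Nat.fib_add_two]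
    push_cast
    ring
  · -- n = 3j+1, j ≥ 2
    have hj2 : 2 ≤ j := by omega
    have hfib := fib_lb j hj2
    have hq1 : Q (n - 1) = (Nat.fib (j + 4) : ℤ) := by
      rw [show n - 1 = 3 * (j : ℤ) from by omega]
      exact h3k j (by omega)
    have hq2 : Q (n - 2) = 6 := by
      rw [show n - 2 = 3 * ((j : ℤ) - 1) + 2 from by omega]
      exact h3k2 _ (by omega)
    rw [hq1, hq2]
    rw [show n = 3 * (j : ℤ) + 1 from by omega, h3k1 _ (by omega)]
    rw [h0 (3 * (j : ℤ) + 1 - (Nat.fib (j + 4) : ℤ)) (by omega)]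
    rw [show 3 * (j : ℤ) + 1 - 6 = 3 * ((j : ℤ) - 2) + 1 from by omega,
        h3k1 _ (by omega)]
    norm_num
  · -- n = 3j+2, j ≥ 2
    have hj2 : 2 ≤ j := by omega
    have hfib := fib_lb j hj2
    have hq1 : Q (n - 1) = 3 := by
      rw [show n - 1 = 3 * (j : ℤ) + 1 from by omega]
      exact h3k1 _ (by omega)
    have hq2 : Q (n - 2) = (Nat.fib (j + 4) : ℤ) := by
      rw [show n - 2 = 3 * (j : ℤ) from by omega]
      exact h3k j (by omega)
    rw [hq1, hq2]
    rw [show n = 3 * (j : ℤ) + 2 from by omega, h3k2 _ (by omega)]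
    rw [show 3 * (j : ℤ) + 2 - 3 = 3 * ((j : ℤ) - 1) + 2 from by omega,
        h3k2 _ (by omega)]
    rw [h0 (3 * (j : ℤ) + 2 - (Nat.fib (j + 4) : ℤ)) (by omega)]
    norm_num
end

section
/- Let r1 and r4 be integers with r4 ≥ 4. Define R : ℤ → ℤ by R(n) = 0 for all n ≤ 0, R(1) = r1, R(2) = 1, R(3) = 0, and for all k ≥ 1: R(4k) = 2k² + (r4 − 2)k, R(4k+1) = 4k, R(4k+2) = 4, R(4k+3) = 3 (so R(4) = r4, R(5) = 4, R(6) = 4, R(7) = 3). Then R(n) = R(n − R(n−1)) + R(n − R(n−2)) + R(n − R(n−3)) for all n ≥ 8. In particular, this recurrence admits a family of solutions with initial condition [r1, 1, 0, r4, 4, 4, 3] containing a quadratic subsequence, two constant subsequences, and a standard linear subsequence. -/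
/-- A family of solutions to R(n) = R(n−R(n−1)) + R(n−R(n−2)) + R(n−R(n−3))
with initial condition [r1, 1, 0, r4, 4, 4, 3], containing a quadratic
subsequence, two constant subsequences, and a standard linear subsequence. -/
theorem quadratic_solution_family (r1 r4 : ℤ) (hr4 : 4 ≤ r4) (R : ℤ → ℤ)
    (h0 : ∀ n : ℤ, n ≤ 0 → R n = 0)
    (h1 : R 1 = r1) (h2 : R 2 = 1) (h3 : R 3 = 0)
    (h4k : ∀ k : ℤ, 1 ≤ k → R (4 * k) = 2 * k ^ 2 + (r4 - 2) * k)
    (h4k1 : ∀ k : ℤ, 1 ≤ k → R (4 * k + 1) = 4 * k)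
    (h4k2 : ∀ k : ℤ, 1 ≤ k → R (4 * k + 2) = 4)
    (h4k3 : ∀ k : ℤ, 1 ≤ k → R (4 * k + 3) = 3) :
    ∀ n : ℤ, 8 ≤ n →
      R n = R (n - R (n - 1)) + R (n - R (n - 2)) + R (n - R (n - 3)) := by
  intro n hn
  set k := n / 4 with hkdef
  have hmod : n % 4 = 0 ∨ n % 4 = 1 ∨ n % 4 = 2 ∨ n % 4 = 3 := by omega
  have hdiv : 4 * k + n % 4 = n := by rw [hkdef]; omega
  rcases hmod with h | h | h | h
  · -- n = 4k, k ≥ 2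
    have hk : 2 ≤ k := by omega
    have e1 : R (n - 1) = 3 := by
      rw [show n - 1 = 4 * (k - 1) + 3 by omega]; exact h4k3 _ (by omega)
    have e2 : R (n - 2) = 4 := by
      rw [show n - 2 = 4 * (k - 1) + 2 by omega]; exact h4k2 _ (by omega)
    have e3 : R (n - 3) = 4 * (k - 1) := by
      rw [show n - 3 = 4 * (k - 1) + 1 by omega]; exact h4k1 _ (by omega)
    rw [e1, e2, e3]
    have f2 : R (n - 4) = 2 * (k - 1) ^ 2 + (r4 - 2) * (k - 1) := by
      rw [show n - 4 = 4 * (k - 1) by omega]; exact h4k _ (by omega)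
    have f3 : R (n - 4 * (k - 1)) = 2 * 1 ^ 2 + (r4 - 2) * 1 := by
      rw [show n - 4 * (k - 1) = 4 * 1 by omega]; exact h4k 1 le_rfl
    have fn : R n = 2 * k ^ 2 + (r4 - 2) * k := by
      rw [show n = 4 * k by omega]; exact h4k _ (by omega)
    rw [f2, f3, fn]; ring
  · -- n = 4k+1, k ≥ 2
    have hk : 2 ≤ k := by omega
    have e1 : R (n - 1) = 2 * k ^ 2 + (r4 - 2) * k := by
      rw [show n - 1 = 4 * k by omega]; exact h4k _ (by omega)
    have e2 : R (n - 2) = 3 := by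
      rw [show n - 2 = 4 * (k - 1) + 3 by omega]; exact h4k3 _ (by omega)
    have e3 : R (n - 3) = 4 := by
      rw [show n - 3 = 4 * (k - 1) + 2 by omega]; exact h4k2 _ (by omega)
    rw [e1, e2, e3]
    have f1 : R (n - (2 * k ^ 2 + (r4 - 2) * k)) = 0 := by
      apply h0; nlinarith
    have f3 : R (n - 4) = 4 * (k - 1) := by
      rw [show n - 4 = 4 * (k - 1) + 1 by omega]; exact h4k1 _ (by omega)
    have fn : R n = 4 * k := by
      rw [show n = 4 * k + 1 by omega]; exact h4k1 _ (by omega)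
    rw [f1, f3, fn]; ring
  · -- n = 4k+2, k ≥ 2
    have hk : 2 ≤ k := by omega
    have e1 : R (n - 1) = 4 * k := by
      rw [show n - 1 = 4 * k + 1 by omega]; exact h4k1 _ (by omega)
    have e2 : R (n - 2) = 2 * k ^ 2 + (r4 - 2) * k := by
      rw [show n - 2 = 4 * k by omega]; exact h4k _ (by omega)
    have e3 : R (n - 3) = 3 := by
      rw [show n - 3 = 4 * (k - 1) + 3 by omega]; exact h4k3 _ (by omega)
    rw [e1, e2, e3]
    have f1 : R (n - 4 * k) = 1 := by rw [show n - 4 * k = 2 by omega]; exact h2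
    have f2 : R (n - (2 * k ^ 2 + (r4 - 2) * k)) = 0 := by
      apply h0; nlinarith
    have fn : R n = 4 := by
      rw [show n = 4 * k + 2 by omega]; exact h4k2 _ (by omega)
    rw [f1, f2, e3, fn]; ring
  · -- n = 4k+3, k ≥ 2
    have hk : 2 ≤ k := by omega
    have e1 : R (n - 1) = 4 := by
      rw [show n - 1 = 4 * k + 2 by omega]; exact h4k2 _ (by omega)
    have e2 : R (n - 2) = 4 * k := by
      rw [show n - 2 = 4 * k + 1 by omega]; exact h4k1 _ (by omega)
    have e3 : R (n - 3) = 2 * k ^ 2 + (r4 - 2) * k := by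
      rw [show n - 3 = 4 * k by omega]; exact h4k _ (by omega)
    rw [e1, e2, e3]
    have f1 : R (n - 4) = 3 := by
      rw [show n - 4 = 4 * (k - 1) + 3 by omega]; exact h4k3 _ (by omega)
    have f2 : R (n - 4 * k) = 0 := by rw [show n - 4 * k = 3 by omega]; exact h3
    have f3 : R (n - (2 * k ^ 2 + (r4 - 2) * k)) = 0 := by
      apply h0; nlinarith
    have fn : R n = 3 := by
      rw [show n = 4 * k + 3 by omega]; exact h4k3 _ (by omega)
    rw [f1, f2, f3, fn]; ring
end

section
/- Define C : ℤ → ℤ by C(n) = 0 for all n ≤ 0, C(1) = 2, and for all k ≥ 1, C(2k) = 2^(2^(k−1)) + 1 and C(2k+1) = 2. Then C satisfies the nonlinear nested recurrence C(n) = C(n − C(n−1))² − 2·C(n − C(n−1)) + 2 for all n ≥ 3. In particular, this nonlinear nested recurrence has a solution containing a doubly exponential subsequence. -/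
lemma aux_2k_le : ∀ k : ℕ, 1 ≤ k → 2 * k ≤ 2 ^ (2 ^ (k - 1)) := by
  intro k hk
  have h1 : k ≤ 2 ^ (k - 1) := by
    have := Nat.lt_two_pow_self (n := k - 1)
    omega
  calc 2 * k ≤ 2 * 2 ^ (k - 1) := by omega
    _ = 2 ^ (k - 1 + 1) := by rw [pow_succ]; ring
    _ ≤ 2 ^ (2 ^ (k - 1)) := Nat.pow_le_pow_right (by norm_num) (by omega)

/-- A doubly exponential solution to the nonlinear nested recurrence
C(n) = C(n − C(n−1))² − 2·C(n − C(n−1)) + 2. -/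
theorem doubly_exponential_solution (C : ℤ → ℤ)
    (h0 : ∀ n : ℤ, n ≤ 0 → C n = 0)
    (h1 : C 1 = 2)
    (h2k : ∀ k : ℕ, 1 ≤ k → C (2 * (k : ℤ)) = 2 ^ (2 ^ (k - 1)) + 1)
    (h2k1 : ∀ k : ℤ, 1 ≤ k → C (2 * k + 1) = 2) :
    ∀ n : ℤ, 3 ≤ n →
      C n = (C (n - C (n - 1))) ^ 2 - 2 * C (n - C (n - 1)) + 2 := by
  intro n hn
  obtain ⟨m, rfl⟩ : ∃ m : ℕ, n = (m : ℤ) :=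
    ⟨n.toNat, (Int.toNat_of_nonneg (by linarith)).symm⟩
  have hm : 3 ≤ m := by exact_mod_cast hn
  rcases Nat.even_or_odd m with ⟨k, hk⟩ | ⟨k, hk⟩
  · -- m = 2k, k ≥ 2
    have hk2 : 2 ≤ k := by omega
    have hCn1 : C ((m : ℤ) - 1) = 2 := by
      have : (m : ℤ) - 1 = 2 * ((k : ℤ) - 1) + 1 := by
        subst hk; push_cast; ring
      rw [this]
      exact h2k1 _ (by exact_mod_cast (by omega : (1:ℤ) ≤ (k:ℤ) - 1))
    rw [hCn1]
    have e2 : (m : ℤ) - 2 = 2 * ((k - 1 : ℕ) : ℤ) := by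
      subst hk; push_cast [Nat.cast_sub (by omega : 1 ≤ k)]; ring
    rw [e2, h2k (k - 1) (by omega)]
    have em : (m : ℤ) = 2 * (k : ℤ) := by subst hk; push_cast; ring
    rw [em, h2k k (by omega)]
    have hexp : 2 ^ (k - 1) = 2 ^ (k - 1 - 1) * 2 := by
      rw [← pow_succ]
      congr 1
      omega
    rw [hexp, pow_mul]
    ring
  · -- m = 2k + 1, k ≥ 1
    have hk1 : 1 ≤ k := by omega
    have hCn1 : C ((m : ℤ) - 1) = 2 ^ (2 ^ (k - 1)) + 1 := by
      have : (m : ℤ) - 1 = 2 * (k : ℤ) := by subst hk; push_cast; ring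
      rw [this]; exact h2k k hk1
    rw [hCn1]
    have hle : (m : ℤ) - (2 ^ (2 ^ (k - 1)) + 1) ≤ 0 := by
      have := aux_2k_le k hk1
      have h2 : (2 * k : ℤ) ≤ 2 ^ (2 ^ (k - 1)) := by exact_mod_cast this
      subst hk; push_cast; linarith
    rw [h0 _ hle]
    have em : (m : ℤ) = 2 * (k : ℤ) + 1 := by subst hk; push_cast; ring
    rw [em, h2k1 k (by exact_mod_cast hk1)]
    ring
end

section
/- There exists a function Q : ℤ → ℤ with Q(n) = 0 for all n ≤ 0, whose values at n = 1, …, 45 are, in order, 0, 4, −40, −9, 8, −8, 7, 1, 5, 13, −24, −1, 8, 8, 8, 1, 5, 13, −8, 7, 8, 8, 23, 1, 5, 13, 8, 15, 8, 16, 31, 1, 5, 13, 24, 23, 8, 24, 39, 1, 5, 13, 40, 31, 8, which satisfies the Hofstadter Q-recurrence Q(n) = Q(n − Q(n−1)) + Q(n − Q(n−2)) for all n ≥ 46, and which satisfies Q(8n+3) = 16n − 40 for all n ≥ 0. In particular, the Q-recurrence admits a period-8 solution with a subsequence of slope 16, arising from adding two standard linear terms. -/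
/-- The 45 initial values of the period-8 solution A275361. -/
def initVals45 : Fin 45 → ℤ :=
  ![0, 4, -40, -9, 8, -8, 7, 1, 5, 13, -24, -1, 8, 8, 8, 1, 5, 13, -8, 7, 8, 8,
    23, 1, 5, 13, 8, 15, 8, 16, 31, 1, 5, 13, 24, 23, 8, 24, 39, 1, 5, 13, 40, 31, 8]

def myQ (n : ℤ) : ℤ :=
  if n ≤ 0 then 0
  else if n = 1 then 0
  else if n = 2 then 4
  else if n = 6 then -8
  else if n = 14 then 8
  else if n = 15 then 8
  else if n % 8 = 0 then 1
  else if n % 8 = 1 then 5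
  else if n % 8 = 2 then 13
  else if n % 8 = 3 then 2 * n - 46
  else if n % 8 = 4 then n - 13
  else if n % 8 = 5 then 8
  else if n % 8 = 6 then n - 14
  else n

lemma myQ_nonpos (n : ℤ) (h : n ≤ 0) : myQ n = 0 := by rw [myQ, if_pos h]
lemma myQ_r0 (n : ℤ) (h : 16 ≤ n) (hm : n % 8 = 0) : myQ n = 1 := by
  rw [myQ, if_neg (by omega : ¬n ≤ 0), if_neg (by omega : ¬n = 1),
    if_neg (by omega : ¬n = 2), if_neg (by omega : ¬n = 6),
    if_neg (by omega : ¬n = 14), if_neg (by omega : ¬n = 15), hm]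
  norm_num
lemma myQ_r1 (n : ℤ) (h : 16 ≤ n) (hm : n % 8 = 1) : myQ n = 5 := by
  rw [myQ, if_neg (by omega : ¬n ≤ 0), if_neg (by omega : ¬n = 1),
    if_neg (by omega : ¬n = 2), if_neg (by omega : ¬n = 6),
    if_neg (by omega : ¬n = 14), if_neg (by omega : ¬n = 15), hm]
  norm_num
lemma myQ_r2 (n : ℤ) (h : 16 ≤ n) (hm : n % 8 = 2) : myQ n = 13 := by
  rw [myQ, if_neg (by omega : ¬n ≤ 0), if_neg (by omega : ¬n = 1),
    if_neg (by omega : ¬n = 2), if_neg (by omega : ¬n = 6),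
    if_neg (by omega : ¬n = 14), if_neg (by omega : ¬n = 15), hm]
  norm_num
lemma myQ_r3 (n : ℤ) (h : 1 ≤ n) (hm : n % 8 = 3) : myQ n = 2 * n - 46 := by
  rw [myQ, if_neg (by omega : ¬n ≤ 0), if_neg (by omega : ¬n = 1),
    if_neg (by omega : ¬n = 2), if_neg (by omega : ¬n = 6),
    if_neg (by omega : ¬n = 14), if_neg (by omega : ¬n = 15), hm]
  norm_num
lemma myQ_r4 (n : ℤ) (h : 16 ≤ n) (hm : n % 8 = 4) : myQ n = n - 13 := by
  rw [myQ, if_neg (by omega : ¬n ≤ 0), if_neg (by omega : ¬n = 1),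
    if_neg (by omega : ¬n = 2), if_neg (by omega : ¬n = 6),
    if_neg (by omega : ¬n = 14), if_neg (by omega : ¬n = 15), hm]
  norm_num
lemma myQ_r5 (n : ℤ) (h : 16 ≤ n) (hm : n % 8 = 5) : myQ n = 8 := by
  rw [myQ, if_neg (by omega : ¬n ≤ 0), if_neg (by omega : ¬n = 1),
    if_neg (by omega : ¬n = 2), if_neg (by omega : ¬n = 6),
    if_neg (by omega : ¬n = 14), if_neg (by omega : ¬n = 15), hm]
  norm_num
lemma myQ_r6 (n : ℤ) (h : 16 ≤ n) (hm : n % 8 = 6) : myQ n = n - 14 := by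
  rw [myQ, if_neg (by omega : ¬n ≤ 0), if_neg (by omega : ¬n = 1),
    if_neg (by omega : ¬n = 2), if_neg (by omega : ¬n = 6),
    if_neg (by omega : ¬n = 14), if_neg (by omega : ¬n = 15), hm]
  norm_num
lemma myQ_r7 (n : ℤ) (h : 16 ≤ n) (hm : n % 8 = 7) : myQ n = n := by
  rw [myQ, if_neg (by omega : ¬n ≤ 0), if_neg (by omega : ¬n = 1),
    if_neg (by omega : ¬n = 2), if_neg (by omega : ¬n = 6),
    if_neg (by omega : ¬n = 14), if_neg (by omega : ¬n = 15), hm]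
  norm_num

lemma myQ_1 : myQ 1 = 0 := by decide
lemma myQ_2 : myQ 2 = 4 := by decide
lemma myQ_14 : myQ 14 = 8 := by decide
lemma myQ_15 : myQ 15 = 8 := by decide
lemma myQ_16 : myQ 16 = 1 := by decide

/-- The Hofstadter Q-recurrence admits a period-8 solution with a subsequence
of slope 16, namely Q(8n+3) = 16n − 40, arising from the length-45 initial
condition listed above. -/
theorem period_eight_slope_sixteen :
    ∃ Q : ℤ → ℤ,
      (∀ n : ℤ, n ≤ 0 → Q n = 0) ∧
      (∀ i : Fin 45, Q ((i : ℕ) + 1 : ℤ) = initVals45 i) ∧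
      (∀ n : ℤ, 46 ≤ n → Q n = Q (n - Q (n - 1)) + Q (n - Q (n - 2))) ∧
      (∀ n : ℤ, 0 ≤ n → Q (8 * n + 3) = 16 * n - 40) := by
  refine ⟨myQ, myQ_nonpos, ?_, ?_, ?_⟩
  · decide
  · intro n hn
    have hr : n % 8 = 0 ∨ n % 8 = 1 ∨ n % 8 = 2 ∨ n % 8 = 3 ∨ n % 8 = 4 ∨
        n % 8 = 5 ∨ n % 8 = 6 ∨ n % 8 = 7 := by omega
    rcases hr with h | h | h | h | h | h | h | h
    · rw [myQ_r7 (n-1) (by omega) (by omega), myQ_r6 (n-2) (by omega) (by omega),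
        (by ring : n - (n - 1) = 1), (by ring : n - (n - 2 - 14) = 16),
        myQ_1, myQ_16, myQ_r0 n (by omega) h]
      norm_num
    · rw [myQ_r0 (n-1) (by omega) (by omega), myQ_r7 (n-2) (by omega) (by omega),
        (by ring : n - (n - 2) = 2), myQ_2,
        myQ_r0 (n-1) (by omega) (by omega), myQ_r1 n (by omega) h]
      norm_num
    · rw [myQ_r1 (n-1) (by omega) (by omega), myQ_r0 (n-2) (by omega) (by omega),
        myQ_r5 (n-5) (by omega) (by omega),
        myQ_r1 (n-1) (by omega) (by omega), myQ_r2 n (by omega) h]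
      norm_num
    · rw [myQ_r2 (n-1) (by omega) (by omega), myQ_r1 (n-2) (by omega) (by omega),
        myQ_r6 (n-13) (by omega) (by omega), myQ_r6 (n-5) (by omega) (by omega),
        myQ_r3 n (by omega) h]
      ring
    · rw [myQ_r3 (n-1) (by omega) (by omega), myQ_r2 (n-2) (by omega) (by omega),
        myQ_nonpos (n - (2*(n-1) - 46)) (by omega),
        myQ_r7 (n-13) (by omega) (by omega), myQ_r4 n (by omega) h]
      ring
    · rw [myQ_r4 (n-1) (by omega) (by omega), myQ_r3 (n-2) (by omega) (by omega),
        (by ring : n - (n - 1 - 13) = 14), myQ_14,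
        myQ_nonpos (n - (2*(n-2) - 46)) (by omega), myQ_r5 n (by omega) h]
      norm_num
    · rw [myQ_r5 (n-1) (by omega) (by omega), myQ_r4 (n-2) (by omega) (by omega),
        myQ_r6 (n-8) (by omega) (by omega),
        (by ring : n - (n - 2 - 13) = 15), myQ_15, myQ_r6 n (by omega) h]
      ring
    · rw [myQ_r6 (n-1) (by omega) (by omega), myQ_r5 (n-2) (by omega) (by omega),
        (by ring : n - (n - 1 - 14) = 15), myQ_15,
        myQ_r7 (n-8) (by omega) (by omega), myQ_r7 n (by omega) h]
      ring
  · intro n hn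
    rw [myQ_r3 (8*n+3) (by omega) (by omega)]
    ring
end

section
/- There exists a function Q : ℤ → ℤ with Q(n) = 0 for all n ≤ 0, whose values at n = 1, …, 16 are, in order, −9, 2, 9, 2, 0, 7, 9, 10, 3, 0, 2, 9, 2, 9, 9, 9, which satisfies the Hofstadter Q-recurrence Q(n) = Q(n − Q(n−1)) + Q(n − Q(n−2)) for all n ≥ 17, and for which there exist integers c, c′ and n₀ such that Q(9n+2) = 10n + c and Q(9n+8) = 10n + c′ for all n ≥ n₀. In particular, the Q-recurrence admits a period-9 solution in which the subsequences Q(9n+2) and Q(9n+8) are both linear with slope 10. -/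
/-- The 16 initial values of the period-9 solution A275362. -/
def initVals16 : Fin 16 → ℤ :=
  ![-9, 2, 9, 2, 0, 7, 9, 10, 3, 0, 2, 9, 2, 9, 9, 9]

/-- Generic (eventually periodic-linear) part of the solution. -/
def gpart (n : ℤ) : ℤ :=
  if n % 9 = 0 then 3
  else if n % 9 = 1 then 9 * (n / 9) - 9
  else if n % 9 = 2 then 10 * (n / 9) + 2
  else if n % 9 = 3 then 9
  else if n % 9 = 4 then 2
  else if n % 9 = 5 then 9 * (n / 9)
  else if n % 9 = 6 then 9
  else if n % 9 = 7 then 9 * (n / 9)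
  else 10 * (n / 9) + 10

/-- The solution function. -/
def Qsol (n : ℤ) : ℤ :=
  if n ≤ 0 then 0
  else if n = 6 then 7
  else if n = 7 then 9
  else if n = 11 then 2
  else gpart n

lemma Qsol_nonpos {n : ℤ} (h : n ≤ 0) : Qsol n = 0 := by
  simp [Qsol, h]

lemma Qsol_g {n : ℤ} (h1 : 1 ≤ n) (h6 : n ≠ 6) (h7 : n ≠ 7) (h11 : n ≠ 11) :
    Qsol n = gpart n := by
  have : ¬ n ≤ 0 := by omega
  simp [Qsol, this, h6, h7, h11]

lemma g0 (k : ℤ) : gpart (9 * k) = 3 := by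
  have h : (9 * k) % 9 = 0 := by omega
  simp [gpart, h]

lemma g1 (k : ℤ) : gpart (9 * k + 1) = 9 * k - 9 := by
  have h : (9 * k + 1) % 9 = 1 := by omega
  have h' : (9 * k + 1) / 9 = k := by omega
  simp [gpart, h, h']

lemma g2 (k : ℤ) : gpart (9 * k + 2) = 10 * k + 2 := by
  have h : (9 * k + 2) % 9 = 2 := by omega
  have h' : (9 * k + 2) / 9 = k := by omega
  simp [gpart, h, h']

lemma g3 (k : ℤ) : gpart (9 * k + 3) = 9 := by
  have h : (9 * k + 3) % 9 = 3 := by omega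
  simp [gpart, h]

lemma g4 (k : ℤ) : gpart (9 * k + 4) = 2 := by
  have h : (9 * k + 4) % 9 = 4 := by omega
  simp [gpart, h]

lemma g5 (k : ℤ) : gpart (9 * k + 5) = 9 * k := by
  have h : (9 * k + 5) % 9 = 5 := by omega
  have h' : (9 * k + 5) / 9 = k := by omega
  simp [gpart, h, h']

lemma g6 (k : ℤ) : gpart (9 * k + 6) = 9 := by
  have h : (9 * k + 6) % 9 = 6 := by omega
  simp [gpart, h]

lemma g7 (k : ℤ) : gpart (9 * k + 7) = 9 * k := by
  have h : (9 * k + 7) % 9 = 7 := by omega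
  have h' : (9 * k + 7) / 9 = k := by omega
  simp [gpart, h, h']

lemma g8 (k : ℤ) : gpart (9 * k + 8) = 10 * k + 10 := by
  have h : (9 * k + 8) % 9 = 8 := by omega
  have h' : (9 * k + 8) / 9 = k := by omega
  simp [gpart, h, h']

/-- Value of Qsol at 9k+r for k ≥ 1 (no exceptional points there). -/
lemma Q0 (k : ℤ) (hk : 1 ≤ k) : Qsol (9 * k) = 3 := by
  rw [Qsol_g (by omega) (by omega) (by omega) (by omega), g0]

lemma Q1 (k : ℤ) (hk : 1 ≤ k) : Qsol (9 * k + 1) = 9 * k - 9 := by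
  rw [Qsol_g (by omega) (by omega) (by omega) (by omega), g1]

lemma Q2 (k : ℤ) (hk : 2 ≤ k) : Qsol (9 * k + 2) = 10 * k + 2 := by
  rw [Qsol_g (by omega) (by omega) (by omega) (by omega), g2]

lemma Q3 (k : ℤ) (hk : 1 ≤ k) : Qsol (9 * k + 3) = 9 := by
  rw [Qsol_g (by omega) (by omega) (by omega) (by omega), g3]

lemma Q4 (k : ℤ) (hk : 1 ≤ k) : Qsol (9 * k + 4) = 2 := by
  rw [Qsol_g (by omega) (by omega) (by omega) (by omega), g4]

lemma Q5 (k : ℤ) (hk : 1 ≤ k) : Qsol (9 * k + 5) = 9 * k := by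
  rw [Qsol_g (by omega) (by omega) (by omega) (by omega), g5]

lemma Q6 (k : ℤ) (hk : 1 ≤ k) : Qsol (9 * k + 6) = 9 := by
  rw [Qsol_g (by omega) (by omega) (by omega) (by omega), g6]

lemma Q7 (k : ℤ) (hk : 1 ≤ k) : Qsol (9 * k + 7) = 9 * k := by
  rw [Qsol_g (by omega) (by omega) (by omega) (by omega), g7]

lemma Q8 (k : ℤ) (hk : 0 ≤ k) : Qsol (9 * k + 8) = 10 * k + 10 := by
  rw [Qsol_g (by omega) (by omega) (by omega) (by omega), g8]

lemma Qrec (n : ℤ) (hn : 17 ≤ n) :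
    Qsol n = Qsol (n - Qsol (n - 1)) + Qsol (n - Qsol (n - 2)) := by
  obtain ⟨k, r, hr0, hr9, hnkr⟩ : ∃ k r : ℤ, 0 ≤ r ∧ r < 9 ∧ n = 9 * k + r :=
    ⟨n / 9, n % 9, by omega, by omega, by omega⟩
  subst hnkr
  interval_cases r
  · -- r = 0, k ≥ 2
    have hk : 2 ≤ k := by omega
    have e1 : 9 * k + 0 - 1 = 9 * (k - 1) + 8 := by ring
    have e2 : 9 * k + 0 - 2 = 9 * (k - 1) + 7 := by ring
    rw [e1, e2, Q8 (k - 1) (by omega), Q7 (k - 1) (by omega)]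
    have e3 : 9 * k + 0 - (10 * (k - 1) + 10) = -k := by ring
    have e4 : 9 * k + 0 - 9 * (k - 1) = 9 * 1 := by ring
    rw [e3, e4, Qsol_nonpos (n := -k) (by omega), Q0 1 (by omega)]
    have : 9 * k + 0 = 9 * k := by ring
    rw [this, Q0 k (by omega)]
    ring
  · -- r = 1
    have hk : 2 ≤ k := by omega
    have e1 : 9 * k + 1 - 1 = 9 * k := by ring
    have e2 : 9 * k + 1 - 2 = 9 * (k - 1) + 8 := by ring
    rw [e1, e2, Q0 k (by omega), Q8 (k - 1) (by omega)]
    have e3 : 9 * k + 1 - 3 = 9 * (k - 1) + 7 := by ring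
    have e4 : 9 * k + 1 - (10 * (k - 1) + 10) = 1 - k := by ring
    rw [e3, e4, Q7 (k - 1) (by omega), Qsol_nonpos (n := 1 - k) (by omega), Q1 k (by omega)]
    ring
  · -- r = 2
    have hk : 2 ≤ k := by omega
    have e1 : 9 * k + 2 - 1 = 9 * k + 1 := by ring
    have e2 : 9 * k + 2 - 2 = 9 * k := by ring
    rw [e1, e2, Q1 k (by omega), Q0 k (by omega)]
    have e3 : 9 * k + 2 - (9 * k - 9) = 11 := by ring
    have e4 : 9 * k + 2 - 3 = 9 * (k - 1) + 8 := by ring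
    rw [e3, e4, Q8 (k - 1) (by omega), Q2 k (by omega)]
    have h11 : Qsol 11 = 2 := by decide
    rw [h11]; ring
  · -- r = 3
    have hk : 2 ≤ k := by omega
    have e1 : 9 * k + 3 - 1 = 9 * k + 2 := by ring
    have e2 : 9 * k + 3 - 2 = 9 * k + 1 := by ring
    rw [e1, e2, Q2 k (by omega), Q1 k (by omega)]
    have e3 : 9 * k + 3 - (10 * k + 2) = 1 - k := by ring
    have e4 : 9 * k + 3 - (9 * k - 9) = 9 * 1 + 3 := by ring
    rw [e3, e4, Qsol_nonpos (n := 1 - k) (by omega), Q3 1 (by omega), Q3 k (by omega)]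
    ring
  · -- r = 4
    have hk : 2 ≤ k := by omega
    have e1 : 9 * k + 4 - 1 = 9 * k + 3 := by ring
    have e2 : 9 * k + 4 - 2 = 9 * k + 2 := by ring
    rw [e1, e2, Q3 k (by omega), Q2 k (by omega)]
    have e3 : 9 * k + 4 - 9 = 9 * (k - 1) + 4 := by ring
    have e4 : 9 * k + 4 - (10 * k + 2) = 2 - k := by ring
    rw [e3, e4, Q4 (k - 1) (by omega), Qsol_nonpos (n := 2 - k) (by omega), Q4 k (by omega)]
    ring
  · -- r = 5
    have hk : 2 ≤ k := by omega
    have e1 : 9 * k + 5 - 1 = 9 * k + 4 := by ring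
    have e2 : 9 * k + 5 - 2 = 9 * k + 3 := by ring
    rw [e1, e2, Q4 k (by omega), Q3 k (by omega)]
    have e3 : 9 * k + 5 - 2 = 9 * k + 3 := by ring
    have e4 : 9 * k + 5 - 9 = 9 * (k - 1) + 5 := by ring
    rw [e3, e4, Q3 k (by omega), Q5 (k - 1) (by omega), Q5 k (by omega)]
    ring
  · -- r = 6
    have hk : 2 ≤ k := by omega
    have e1 : 9 * k + 6 - 1 = 9 * k + 5 := by ring
    have e2 : 9 * k + 6 - 2 = 9 * k + 4 := by ring
    rw [e1, e2, Q5 k (by omega), Q4 k (by omega)]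
    have e3 : 9 * k + 6 - 9 * k = 6 := by ring
    have e4 : 9 * k + 6 - 2 = 9 * k + 4 := by ring
    rw [e3, e4, Q4 k (by omega), Q6 k (by omega)]
    have h6 : Qsol 6 = 7 := by decide
    rw [h6]; ring
  · -- r = 7
    have hk : 2 ≤ k := by omega
    have e1 : 9 * k + 7 - 1 = 9 * k + 6 := by ring
    have e2 : 9 * k + 7 - 2 = 9 * k + 5 := by ring
    rw [e1, e2, Q6 k (by omega), Q5 k (by omega)]
    have e3 : 9 * k + 7 - 9 = 9 * (k - 1) + 7 := by ring
    have e4 : 9 * k + 7 - 9 * k = 7 := by ring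
    rw [e3, e4, Q7 (k - 1) (by omega), Q7 k (by omega)]
    have h7 : Qsol 7 = 9 := by decide
    rw [h7]; ring
  · -- r = 8, k ≥ 1
    have hk : 1 ≤ k := by omega
    have e1 : 9 * k + 8 - 1 = 9 * k + 7 := by ring
    have e2 : 9 * k + 8 - 2 = 9 * k + 6 := by ring
    rw [e1, e2, Q7 k (by omega), Q6 k (by omega)]
    have e3 : 9 * k + 8 - 9 * k = 9 * 0 + 8 := by ring
    have e4 : 9 * k + 8 - 9 = 9 * (k - 1) + 8 := by ring
    rw [e3, e4, Q8 0 (by omega), Q8 (k - 1) (by omega), Q8 k (by omega)]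
    ring

/-- The Hofstadter Q-recurrence admits a period-9 solution, given by the
length-16 initial condition listed above, in which the subsequences Q(9n+2)
and Q(9n+8) are both eventually linear with slope 10. -/
theorem period_nine_two_steep_linear :
    ∃ Q : ℤ → ℤ,
      (∀ n : ℤ, n ≤ 0 → Q n = 0) ∧
      (∀ i : Fin 16, Q ((i : ℕ) + 1 : ℤ) = initVals16 i) ∧
      (∀ n : ℤ, 17 ≤ n → Q n = Q (n - Q (n - 1)) + Q (n - Q (n - 2))) ∧
      (∃ c c' n₀ : ℤ, ∀ n : ℤ, n₀ ≤ n →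
        Q (9 * n + 2) = 10 * n + c ∧ Q (9 * n + 8) = 10 * n + c') := by
  refine ⟨Qsol, fun n hn => Qsol_nonpos hn, ?_, Qrec, 2, 10, 2, fun n hn =>
    ⟨Q2 n hn, Q8 n (by omega)⟩⟩
  decide
end

section
/- Let d ≥ 1 and K ≥ d be integers, let α_1, …, α_d be nonnegative integers with α_1 + ⋯ + α_d ≥ 2, and let f : ℕ → ℤ satisfy f(k) ≥ 0 for all k ≥ K. Suppose a : ℕ → ℤ satisfies a(k) = Σ_{ℓ=1}^{d} α_ℓ · a(k − ℓ) + f(k) for all k ≥ K, and a(k) ≥ 1 for all K − d ≤ k ≤ K − 1. Then a grows at least exponentially: there exist a real ρ > 1 and a real c > 0 such that a(k) ≥ c · ρ^k for all k ≥ K. -/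
open Finset in
/-- Growth lemma: a sequence governed by a nonnegative linear recurrence whose
coefficients sum to at least 2, with nonnegative nonhomogeneous part and a
positive initial window, grows at least exponentially. -/
theorem exponential_growth_of_heavy_recurrence
    (d K : ℕ) (hd : 1 ≤ d) (hK : d ≤ K) (α : ℕ → ℕ)
    (hsum : 2 ≤ ∑ ℓ ∈ Icc 1 d, α ℓ)
    (f : ℕ → ℤ) (hf : ∀ k : ℕ, K ≤ k → 0 ≤ f k)
    (a : ℕ → ℤ)
    (hrec : ∀ k : ℕ, K ≤ k → a k = (∑ ℓ ∈ Icc 1 d, (α ℓ : ℤ) * a (k - ℓ)) + f k)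
    (hinit : ∀ k : ℕ, K - d ≤ k → k ≤ K - 1 → 1 ≤ a k) :
    ∃ ρ c : ℝ, 1 < ρ ∧ 0 < c ∧ ∀ k : ℕ, K ≤ k → c * ρ ^ k ≤ (a k : ℝ) := by
  have key : ∀ k : ℕ, K - d ≤ k → (2:ℤ) ^ ((k - (K - d)) / d) ≤ a k := by
    intro k
    induction k using Nat.strong_induction_on with
    | _ k ih =>
      intro hk
      by_cases hkK : k < K
      · have h0 : (k - (K - d)) / d = 0 := Nat.div_eq_of_lt (by omega)
        rw [h0, pow_zero]
        exact hinit k hk (by omega)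
      · push_neg at hkK
        rw [hrec k hkK]
        have hB : ∀ ℓ ∈ Icc 1 d, (α ℓ : ℤ) * (2:ℤ) ^ ((k - K) / d) ≤ (α ℓ : ℤ) * a (k - ℓ) := by
          intro ℓ hℓ
          simp only [mem_Icc] at hℓ
          have h1 : k - ℓ < k := by omega
          have h2 : K - d ≤ k - ℓ := by omega
          have h3 := ih (k - ℓ) h1 h2
          have h4 : (k - K) / d ≤ (k - ℓ - (K - d)) / d :=
            Nat.div_le_div_right (by omega)
          have h5 : (2:ℤ) ^ ((k - K) / d) ≤ (2:ℤ) ^ ((k - ℓ - (K - d)) / d) :=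
            pow_le_pow_right₀ one_le_two h4
          exact mul_le_mul_of_nonneg_left (h5.trans h3) (by positivity)
        have hsum2 : (∑ ℓ ∈ Icc 1 d, (α ℓ : ℤ)) * (2:ℤ) ^ ((k - K) / d)
            ≤ ∑ ℓ ∈ Icc 1 d, (α ℓ : ℤ) * a (k - ℓ) := by
          rw [Finset.sum_mul]
          exact Finset.sum_le_sum hB
        have hsum3 : (2:ℤ) * (2:ℤ) ^ ((k - K) / d)
            ≤ (∑ ℓ ∈ Icc 1 d, (α ℓ : ℤ)) * (2:ℤ) ^ ((k - K) / d) := by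
          apply mul_le_mul_of_nonneg_right _ (by positivity)
          exact_mod_cast hsum
        have hexp : (k - (K - d)) / d = (k - K) / d + 1 := by
          have h : k - (K - d) = (k - K) + d := by omega
          rw [h, Nat.add_div_right _ (by omega)]
        rw [hexp, pow_succ]
        have hfk := hf k hkK
        nlinarith [hsum3.trans hsum2]
  have hdR : (0:ℝ) < d := by exact_mod_cast hd
  refine ⟨(2:ℝ) ^ ((1:ℝ)/d), (2:ℝ) ^ (-(K:ℝ)/d), ?_, ?_, ?_⟩
  · rw [Real.one_lt_rpow_iff_of_pos (by norm_num)]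
    exact Or.inl ⟨one_lt_two, div_pos one_pos hdR⟩
  · positivity
  · intro k hk
    have hak := key k (by omega)
    set e : ℕ := (k - (K - d)) / d with he
    have h1 : ((2:ℤ)^e : ℝ) ≤ (a k : ℝ) := by exact_mod_cast hak
    have h2 : ((2:ℤ)^e : ℝ) = (2:ℝ) ^ (e:ℝ) := by
      push_cast
      rw [Real.rpow_natCast]
    have hlt : k - K < (e * d) := by
      have hd0 : 0 < d := hd
      have heq : e = (k - K) / d + 1 := by
        have h : k - (K - d) = (k - K) + d := by omega
        rw [he, h, Nat.add_div_right _ (by omega)]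
      rw [heq]
      exact (Nat.div_lt_iff_lt_mul hd0).mp (Nat.lt_succ_self _)
    have hexp : ((k:ℝ) - K) / d ≤ (e:ℝ) := by
      rw [div_le_iff₀ (by positivity)]
      have : ((k - K : ℕ) : ℝ) ≤ ((e * d : ℕ) : ℝ) := by exact_mod_cast hlt.le
      push_cast at this
      have hkK : ((k - K : ℕ) : ℝ) = (k:ℝ) - K := by
        push_cast [Nat.cast_sub hk]; ring
      linarith [hkK ▸ this]
    calc (2:ℝ) ^ (-(K:ℝ)/d) * ((2:ℝ) ^ ((1:ℝ)/d)) ^ k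
        = (2:ℝ) ^ (((k:ℝ) - K)/d) := by
          rw [← Real.rpow_natCast ((2:ℝ)^((1:ℝ)/d)) k, ← Real.rpow_mul (by norm_num),
            ← Real.rpow_add (by norm_num)]
          ring_nf
      _ ≤ (2:ℝ) ^ (e:ℝ) :=
          Real.rpow_le_rpow_of_exponent_le (by norm_num) hexp
      _ = ((2:ℤ)^e : ℝ) := h2.symm
      _ ≤ (a k : ℝ) := h1
end

section
/- There is no eventually constant positive solution of the Hofstadter Q-recurrence: there do not exist a function Q : ℤ → ℤ with Q(n) = 0 for all n ≤ 0, integers N and M, and an integer c ≥ 1, such that Q(n) = Q(n − Q(n−1)) + Q(n − Q(n−2)) for all n ≥ N and Q(n) = c for all n ≥ M. -/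
/-- The Hofstadter Q-recurrence has no eventually constant positive solution. -/
theorem no_eventually_constant_solution :
    ¬ ∃ (Q : ℤ → ℤ) (N M c : ℤ), 1 ≤ c ∧
      (∀ n : ℤ, n ≤ 0 → Q n = 0) ∧
      (∀ n : ℤ, N ≤ n → Q n = Q (n - Q (n - 1)) + Q (n - Q (n - 2))) ∧
      (∀ n : ℤ, M ≤ n → Q n = c) := by
  rintro ⟨Q, N, M, c, hc, _, hrec, hconst⟩
  set n := max N (max (M + 2) (M + c)) with hn
  have hN : N ≤ n := le_max_left _ _
  have h1 : M ≤ n - 1 := by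
    have := le_trans (le_max_left (M+2) (M+c)) (le_max_right N _); omega
  have h2 : M ≤ n - 2 := by
    have := le_trans (le_max_left (M+2) (M+c)) (le_max_right N _); omega
  have h3 : M ≤ n := by omega
  have hcn : M ≤ n - c := by
    have := le_trans (le_max_right (M+2) (M+c)) (le_max_right N _); omega
  have := hrec n hN
  rw [hconst _ h1, hconst _ h2, hconst _ hcn, hconst _ h3] at this
  omega
end

section
/- There is no solution of the Hofstadter Q-recurrence that eventually dominates the identity: there do not exist a function Q : ℤ → ℤ with Q(n) = 0 for all n ≤ 0 and integers N and M such that Q(n) = Q(n − Q(n−1)) + Q(n − Q(n−2)) for all n ≥ N and Q(n) ≥ n for all n ≥ M. -/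
/-- The Hofstadter Q-recurrence has no solution that eventually dominates the
identity. -/
theorem no_eventually_dominating_solution :
    ¬ ∃ (Q : ℤ → ℤ) (N M : ℤ),
      (∀ n : ℤ, n ≤ 0 → Q n = 0) ∧
      (∀ n : ℤ, N ≤ n → Q n = Q (n - Q (n - 1)) + Q (n - Q (n - 2))) ∧
      (∀ n : ℤ, M ≤ n → n ≤ Q n) := by
  rintro ⟨Q, N, M, h0, hrec, hdom⟩
  set C : ℤ := max 0 (max (Q 1) (Q 2)) with hC
  have hsmall : ∀ x : ℤ, x ≤ 2 → Q x ≤ C := by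
    intro x hx
    rcases show x ≤ 0 ∨ x = 1 ∨ x = 2 by omega with h | h | h
    · rw [h0 x h]; exact le_max_left _ _
    · subst h; exact le_trans (le_max_left _ _) (le_max_right _ _)
    · subst h; exact le_trans (le_max_right _ _) (le_max_right _ _)
  set n : ℤ := max N (max (M + 2) (2 * C + 1)) with hn
  have hnN : N ≤ n := le_max_left _ _
  have hnM2 : M + 2 ≤ n := le_trans (le_max_left _ _) (le_max_right _ _)
  have hnC : 2 * C + 1 ≤ n := le_trans (le_max_right _ _) (le_max_right _ _)
  have h1 : n - 1 ≤ Q (n - 1) := hdom _ (by omega)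
  have h2 : n - 2 ≤ Q (n - 2) := hdom _ (by omega)
  have hq : Q n = Q (n - Q (n - 1)) + Q (n - Q (n - 2)) := hrec n hnN
  have hb1 : Q (n - Q (n - 1)) ≤ C := hsmall _ (by omega)
  have hb2 : Q (n - Q (n - 2)) ≤ C := hsmall _ (by omega)
  have hdn : n ≤ Q n := hdom n (by omega)
  omega
end
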